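/- arXiv:2401.00311 — 6 statements merged into one kernel-verified Lean document; each statement's English description precedes it below -/
import Mathlib

section
/- Let d be a point on line A (i.e., A ⬝ d = 0) and suppose a₁ lies on the line cd (i.e., a₁ ⬝ (c ×₃ d) = 0, with c, d independent). Then d lies on Grassmann's cubic: G(d) = 0, where G(x) = (xaAa₁) ⬝ ((xbBkCb₁) ×₃ (xc)). -/
open Matrix

lemma grassmann_aux (a A a₁ c d X : Fin 3 → ℝ) :
    (((d ⨯₃ a) ⨯₃ A) ⨯₃ a₁) ⬝ᵥ (X ⨯₃ (d ⨯₃ c))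
      = (A ⬝ᵥ d) * ((a ⨯₃ a₁) ⬝ᵥ (X ⨯₃ (d ⨯₃ c)))
        + (A ⬝ᵥ a) * ((a₁ ⬝ᵥ (c ⨯₃ d)) * (X ⬝ᵥ d)) := by
  simp [cross_apply, dotProduct, Fin.sum_univ_three]
  ring

/-- If d lies on the line A and a₁ lies on the line cd (with c, d independent),
then d lies on Grassmann's cubic. -/
theorem grassmann_cubic_through_d (a a₁ b b₁ c d k A B C : Fin 3 → ℝ)
    (hdA : A ⬝ᵥ d = 0) (hcd : LinearIndependent ℝ ![c, d])
    (ha₁ : a₁ ⬝ᵥ (c ⨯₃ d) = 0) :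
    (((d ⨯₃ a) ⨯₃ A) ⨯₃ a₁) ⬝ᵥ
      ((((((d ⨯₃ b) ⨯₃ B) ⨯₃ k) ⨯₃ C) ⨯₃ b₁) ⨯₃ (d ⨯₃ c)) = 0 := by
  rw [grassmann_aux, hdA, ha₁]
  ring
end

section
/- Suppose the lines A, B, C are concurrent, meeting at a common point e (i.e., A ⬝ e = B ⬝ e = C ⬝ e = 0), with e not equal to a, b, or c projectively. Then e lies on Grassmann's cubic: G(e) = 0, where G(x) is the bracket of the lines xaAa₁, xbBkCb₁, and xc. -/
open Matrix

private lemma trip (u v w : Fin 3 → ℝ) :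
    (u ⨯₃ v) ⨯₃ w = (w ⬝ᵥ u) • v - (w ⬝ᵥ v) • u := by
  ext i; fin_cases i <;>
    simp [cross_apply, dotProduct, Fin.sum_univ_three] <;> ring

private lemma smul_cross (t : ℝ) (u v : Fin 3 → ℝ) :
    (t • u) ⨯₃ v = t • (u ⨯₃ v) := by
  ext i; fin_cases i <;>
    simp [cross_apply] <;> ring

/-- If the lines A, B, C are concurrent at a point e, distinct (projectively)
from a, b, c, then e lies on Grassmann's cubic. -/
theorem grassmann_cubic_through_e (a a₁ b b₁ c e k A B C : Fin 3 → ℝ)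
    (heA : A ⬝ᵥ e = 0) (heB : B ⬝ᵥ e = 0) (heC : C ⬝ᵥ e = 0)
    (hea : ∀ t : ℝ, e ≠ t • a) (heb : ∀ t : ℝ, e ≠ t • b)
    (hec : ∀ t : ℝ, e ≠ t • c) :
    (((e ⨯₃ a) ⨯₃ A) ⨯₃ a₁) ⬝ᵥ
      ((((((e ⨯₃ b) ⨯₃ B) ⨯₃ k) ⨯₃ C) ⨯₃ b₁) ⨯₃ (e ⨯₃ c)) = 0 := by
  have h1 : (e ⨯₃ a) ⨯₃ A = (-(A ⬝ᵥ a)) • e := by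
    rw [trip, heA, zero_smul, zero_sub, ← neg_smul]
  have h2 : (e ⨯₃ b) ⨯₃ B = (-(B ⬝ᵥ b)) • e := by
    rw [trip, heB, zero_smul, zero_sub, ← neg_smul]
  rw [h1, h2, smul_cross, smul_cross, smul_cross, smul_cross]
  have h3 : (e ⨯₃ k) ⨯₃ C = (-(C ⬝ᵥ k)) • e := by
    rw [trip, heC, zero_smul, zero_sub, ← neg_smul]
  rw [h3, smul_cross, smul_cross]
  have h4 : (e ⨯₃ b₁) ⨯₃ (e ⨯₃ c) = (-((e ⨯₃ c) ⬝ᵥ b₁)) • e := by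
    rw [trip, dotProduct_comm, dot_self_cross, zero_smul, zero_sub, ← neg_smul]
  rw [smul_cross, h4]
  have h5 : (e ⨯₃ a₁) ⬝ᵥ e = 0 := by
    rw [dotProduct_comm]; exact dot_self_cross e a₁
  simp only [smul_dotProduct, dotProduct_smul, h5, mul_zero, smul_eq_mul]
end

section
/- Let f be a point with b₁ on the line k ×₃ f (i.e., b₁ ⬝ (k ×₃ f) = 0), f on line B (i.e., B ⬝ f = 0), and a₁ on the line a ×₃ f. Then f lies on Grassmann's cubic: G(f) = 0, where G(x) is the bracket of the lines xaAa₁, xbBkCb₁, and xc. -/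
open Matrix

private lemma expand_cross (u v : Fin 3 → ℝ) :
    u ⨯₃ v = ![u 1 * v 2 - u 2 * v 1, u 2 * v 0 - u 0 * v 2, u 0 * v 1 - u 1 * v 0] :=
  cross_apply u v

private lemma key_bracket (v₁ v₂ v₃ f : Fin 3 → ℝ) (hf : f ≠ 0)
    (h1 : v₁ ⬝ᵥ f = 0) (h2 : v₂ ⬝ᵥ f = 0) (h3 : v₃ ⬝ᵥ f = 0) :
    v₁ ⬝ᵥ (v₂ ⨯₃ v₃) = 0 := by
  have hid : ∀ i, (v₁ ⬝ᵥ (v₂ ⨯₃ v₃)) * f i =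
      (v₁ ⬝ᵥ f) * (v₂ ⨯₃ v₃) i + (v₂ ⬝ᵥ f) * (v₃ ⨯₃ v₁) i
        + (v₃ ⬝ᵥ f) * (v₁ ⨯₃ v₂) i := by
    intro i
    fin_cases i <;>
      simp [expand_cross, dotProduct, Fin.sum_univ_three] <;> ring
  obtain ⟨i, hi⟩ : ∃ i, f i ≠ 0 := by
    by_contra h
    push_neg at h
    exact hf (funext fun i => h i)
  have := hid i
  rw [h1, h2, h3] at this
  simp only [zero_mul, add_zero] at this
  exact (mul_eq_zero.mp this).resolve_right hi

/-- If b₁ lies on the line kf, f lies on the line B, and a₁ lies on the line af,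
then f lies on Grassmann's cubic. -/
theorem grassmann_cubic_through_f (a a₁ b b₁ c f k A B C : Fin 3 → ℝ)
    (hb₁ : b₁ ⬝ᵥ (k ⨯₃ f) = 0) (hfB : B ⬝ᵥ f = 0)
    (ha₁ : a₁ ⬝ᵥ (a ⨯₃ f) = 0) :
    (((f ⨯₃ a) ⨯₃ A) ⨯₃ a₁) ⬝ᵥ
      ((((((f ⨯₃ b) ⨯₃ B) ⨯₃ k) ⨯₃ C) ⨯₃ b₁) ⨯₃ (f ⨯₃ c)) = 0 := by
  by_cases hf : f = 0
  · subst hf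
    simp [expand_cross, dotProduct, Fin.sum_univ_three]
  · simp only [expand_cross, dotProduct, Fin.sum_univ_three,
      Matrix.cons_val_zero, Matrix.cons_val_one, Matrix.head_cons,
      Matrix.cons_val_two, Matrix.tail_cons] at hb₁ hfB ha₁
    apply key_bracket _ _ _ f hf
    · -- v₁ ⬝ f = 0, uses ha₁
      simp only [expand_cross, dotProduct, Fin.sum_univ_three,
        Matrix.cons_val_zero, Matrix.cons_val_one, Matrix.head_cons,
        Matrix.cons_val_two, Matrix.tail_cons]
      linear_combination (-(A 0 * f 0 + A 1 * f 1 + A 2 * f 2)) * ha₁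
    · -- v₂ ⬝ f = 0, uses hb₁ and hfB
      simp only [expand_cross, dotProduct, Fin.sum_univ_three,
        Matrix.cons_val_zero, Matrix.cons_val_one, Matrix.head_cons,
        Matrix.cons_val_two, Matrix.tail_cons]
      linear_combination
        ((B 0 * b 0 + B 1 * b 1 + B 2 * b 2) * (C 0 * f 0 + C 1 * f 1 + C 2 * f 2)
          - (C 0 * b 0 + C 1 * b 1 + C 2 * b 2) * (B 0 * f 0 + B 1 * f 1 + B 2 * f 2)) * hb₁
        - (C 0 * k 0 + C 1 * k 1 + C 2 * k 2) *
            (b 0 * (b₁ 1 * f 2 - b₁ 2 * f 1) + b 1 * (b₁ 2 * f 0 - b₁ 0 * f 2)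
              + b 2 * (b₁ 0 * f 1 - b₁ 1 * f 0)) * hfB
    · -- (f ⨯₃ c) ⬝ f = 0
      simp only [expand_cross, dotProduct, Fin.sum_univ_three,
        Matrix.cons_val_zero, Matrix.cons_val_one, Matrix.head_cons,
        Matrix.cons_val_two, Matrix.tail_cons]
      ring
end

section
/- Third intersection of a line with Grassmann's cubic: let p = (abAa₁) ×₃ (abBkCb₁), where abAa₁ = (((a ×₃ b) ×₃ A) ×₃ a₁) and abBkCb₁ = (((((a ×₃ b) ×₃ B) ×₃ k) ×₃ C) ×₃ b₁), and set y = (p ×₃ c) ×₃ (a ×₃ b). If y is nonzero and not proportional to a or b, then y lies on Grassmann's cubic G(x) = 0 and on the line through a and b; thus y is the third point of intersection of the line ab with the cubic. -/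
open Matrix

private lemma triple_shift (u v w : Fin 3 → ℝ) : u ⬝ᵥ (v ⨯₃ w) = (u ⨯₃ v) ⬝ᵥ w := by
  simp [cross_apply, dotProduct, Fin.sum_univ_three]; ring

private lemma vec_triple (u v w : Fin 3 → ℝ) :
    u ⨯₃ (v ⨯₃ w) = (u ⬝ᵥ w) • v - (u ⬝ᵥ v) • w := by
  funext i
  fin_cases i <;>
    simp [cross_apply, dotProduct, Fin.sum_univ_three] <;> ring

/-- The third point of intersection of the line ab with Grassmann's cubic:
the point y = (pc)(ab), with p = (abAa₁)(abBkCb₁), lies on the cubic and on the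
line through a and b, provided y is nonzero and not proportional to a or b. -/
theorem grassmann_third_intersection (a a₁ b b₁ c k A B C : Fin 3 → ℝ)
    (p y : Fin 3 → ℝ)
    (hp : p = ((((a ⨯₃ b) ⨯₃ A) ⨯₃ a₁)) ⨯₃ (((((a ⨯₃ b) ⨯₃ B) ⨯₃ k) ⨯₃ C) ⨯₃ b₁))
    (hy : y = (p ⨯₃ c) ⨯₃ (a ⨯₃ b))
    (hy0 : y ≠ 0) (hya : ∀ t : ℝ, y ≠ t • a) (hyb : ∀ t : ℝ, y ≠ t • b) :
    (((y ⨯₃ a) ⨯₃ A) ⨯₃ a₁) ⬝ᵥ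
        ((((((y ⨯₃ b) ⨯₃ B) ⨯₃ k) ⨯₃ C) ⨯₃ b₁) ⨯₃ (y ⨯₃ c)) = 0 ∧
      (a ⨯₃ b) ⬝ᵥ y = 0 := by
  set μ : ℝ := (p ⨯₃ c) ⬝ᵥ b with hμ
  set ν : ℝ := -((p ⨯₃ c) ⬝ᵥ a) with hν
  have hyab : y = μ • a + ν • b := by
    rw [hy, vec_triple, hμ, hν]; module
  have hya' : y ⨯₃ a = ν • (b ⨯₃ a) := by
    rw [hyab]; simp [cross_self]
  have hyb' : y ⨯₃ b = μ • (a ⨯₃ b) := by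
    rw [hyab]; simp [cross_self]
  constructor
  · have hperp : (p ⨯₃ c) ⬝ᵥ y = 0 := by
      rw [hy, triple_shift, cross_self, zero_dotProduct]
    rw [hya', hyb']
    simp only [LinearMap.map_smul, LinearMap.smul_apply, smul_dotProduct,
      dotProduct_smul, smul_eq_mul]
    rw [← cross_anticomm a b]
    simp only [LinearMap.map_neg, LinearMap.neg_apply, neg_dotProduct, dotProduct_neg]
    rw [triple_shift, ← hp]
    have hz : p ⬝ᵥ (y ⨯₃ c) = 0 := by
      rw [triple_product_permutation, ← cross_anticomm, dotProduct_neg,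
        dotProduct_comm, hperp, neg_zero]
    rw [hz]; ring
  · rw [dotProduct_comm, hyab, add_dotProduct, smul_dotProduct, smul_dotProduct,
      dot_self_cross, dot_cross_self]
    simp
end

section
/- Multilinearity specialization on a secant line: for any scalars μ, ν and points a, b on Grassmann's cubic G, one has G(μ•a + ν•b) = μν · ((baAa₁) ⬝ ((abBkCb₁) ×₃ ((μ•a + ν•b) ×₃ c))), where baAa₁ = (((b ×₃ a) ×₃ A) ×₃ a₁) and abBkCb₁ = (((((a ×₃ b) ×₃ B) ×₃ k) ×₃ C) ×₃ b₁). -/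
open Matrix

/-- Multilinearity specialization of Grassmann's cubic form on the secant line ab. -/
theorem grassmann_cubic_on_secant (a a₁ b b₁ c k A B C : Fin 3 → ℝ) (μ ν : ℝ) :
    ((((μ • a + ν • b) ⨯₃ a) ⨯₃ A) ⨯₃ a₁) ⬝ᵥ
        ((((((μ • a + ν • b) ⨯₃ b) ⨯₃ B) ⨯₃ k) ⨯₃ C) ⨯₃ b₁) ⨯₃
          ((μ • a + ν • b) ⨯₃ c)
      = μ * ν *
        ((((b ⨯₃ a) ⨯₃ A) ⨯₃ a₁) ⬝ᵥ
          (((((a ⨯₃ b) ⨯₃ B) ⨯₃ k) ⨯₃ C) ⨯₃ b₁) ⨯₃ ((μ • a + ν • b) ⨯₃ c)) := by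
  have h1 : (μ • a + ν • b) ⨯₃ a = ν • (b ⨯₃ a) := by
    simp [LinearMap.map_add, LinearMap.map_smul₂, cross_self]
  have h2 : (μ • a + ν • b) ⨯₃ b = μ • (a ⨯₃ b) := by
    simp [LinearMap.map_add, LinearMap.map_smul₂, cross_self]
  rw [h1, h2]
  simp [LinearMap.map_smul₂, smul_dotProduct, dotProduct_smul, smul_smul]
  ring
end

section
/- Tangent line to Grassmann's cubic at a: let p = (abBkCb₁) ×₃ (a ×₃ c) with abBkCb₁ = (((((a ×₃ b) ×₃ B) ×₃ k) ×₃ C) ×₃ b₁), and define the line T = ((p ×₃ a₁) ×₃ A) ×₃ a. Then for every vector v, the first-order term of G(a + εv) in ε is (((v ×₃ a) ×₃ A) ×₃ a₁) ⬝ p (up to sign), and this vanishes whenever v lies on the line T. Hence T is tangent to the cubic G = 0 at a (assuming a is a smooth point and the construction is nondegenerate). -/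
open Matrix

lemma add_cross' (x y z : Fin 3 → ℝ) : (x + y) ⨯₃ z = x ⨯₃ z + y ⨯₃ z := by
  funext i; fin_cases i <;> (simp [cross_apply]; try ring)

lemma cross_add' (x y z : Fin 3 → ℝ) : x ⨯₃ (y + z) = x ⨯₃ y + x ⨯₃ z := by
  funext i; fin_cases i <;> (simp [cross_apply]; try ring)

lemma smul_cross' (ε : ℝ) (x y : Fin 3 → ℝ) : (ε • x) ⨯₃ y = ε • (x ⨯₃ y) := by
  funext i; fin_cases i <;> (simp [cross_apply]; try ring)

lemma cross_smul' (ε : ℝ) (x y : Fin 3 → ℝ) : x ⨯₃ (ε • y) = ε • (x ⨯₃ y) := by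
  funext i; fin_cases i <;> (simp [cross_apply]; try ring)

lemma zero_cross' (y : Fin 3 → ℝ) : (0 : Fin 3 → ℝ) ⨯₃ y = 0 := by
  funext i; fin_cases i <;> simp [cross_apply]

lemma cross_zero' (y : Fin 3 → ℝ) : y ⨯₃ (0 : Fin 3 → ℝ) = 0 := by
  funext i; fin_cases i <;> simp [cross_apply]

lemma tangent_pairing (a a₁ A v p : Fin 3 → ℝ) :
    (((p ⨯₃ a₁) ⨯₃ A) ⨯₃ a) ⬝ᵥ v = - ((((v ⨯₃ a) ⨯₃ A) ⨯₃ a₁) ⬝ᵥ p) := by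
  simp [cross_apply, dotProduct, Fin.sum_univ_three]; ring

/-- The tangent line to Grassmann's cubic at a: with p = (abBkCb₁)(ac) and
T = pa₁Aa, the expansion of G(a + εv) has first-order coefficient
(vaAa₁) ⬝ p, and this coefficient vanishes for every v on the line T. -/
theorem grassmann_tangent_line (a a₁ b b₁ c k A B C : Fin 3 → ℝ)
    (p T : Fin 3 → ℝ)
    (hp : p = (((((a ⨯₃ b) ⨯₃ B) ⨯₃ k) ⨯₃ C) ⨯₃ b₁) ⨯₃ (a ⨯₃ c))
    (hT : T = ((p ⨯₃ a₁) ⨯₃ A) ⨯₃ a) (hT0 : T ≠ 0) :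
    (∀ v : Fin 3 → ℝ, ∀ ε : ℝ,
        ((((a + ε • v) ⨯₃ a) ⨯₃ A) ⨯₃ a₁) ⬝ᵥ
            ((((((a + ε • v) ⨯₃ b) ⨯₃ B) ⨯₃ k) ⨯₃ C) ⨯₃ b₁) ⨯₃ ((a + ε • v) ⨯₃ c)
          = ε * ((((v ⨯₃ a) ⨯₃ A) ⨯₃ a₁) ⬝ᵥ p)
            + ε ^ 2 *
              ((((v ⨯₃ a) ⨯₃ A) ⨯₃ a₁) ⬝ᵥ
                  (((((a ⨯₃ b) ⨯₃ B) ⨯₃ k) ⨯₃ C) ⨯₃ b₁) ⨯₃ (v ⨯₃ c)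
                + (((v ⨯₃ a) ⨯₃ A) ⨯₃ a₁) ⬝ᵥ
                  (((((v ⨯₃ b) ⨯₃ B) ⨯₃ k) ⨯₃ C) ⨯₃ b₁) ⨯₃ (a ⨯₃ c))
            + ε ^ 3 *
              ((((v ⨯₃ a) ⨯₃ A) ⨯₃ a₁) ⬝ᵥ
                (((((v ⨯₃ b) ⨯₃ B) ⨯₃ k) ⨯₃ C) ⨯₃ b₁) ⨯₃ (v ⨯₃ c))) ∧
      ∀ v : Fin 3 → ℝ, T ⬝ᵥ v = 0 →
        (((v ⨯₃ a) ⨯₃ A) ⨯₃ a₁) ⬝ᵥ p = 0 := by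
  subst hp hT
  constructor
  · intro v ε
    simp only [add_cross', cross_add', smul_cross', cross_smul', cross_self,
      zero_cross', cross_zero', smul_zero, zero_add, add_zero, zero_cross',
      add_dotProduct, dotProduct_add, smul_dotProduct, dotProduct_smul,
      smul_eq_mul, smul_smul]
    ring
  · intro v hv
    have := tangent_pairing a a₁ A v
      ((((((a ⨯₃ b) ⨯₃ B) ⨯₃ k) ⨯₃ C) ⨯₃ b₁) ⨯₃ (a ⨯₃ c))
    rw [hv] at this
    linarith
end
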